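/- The cardinality of the Apéry set of M with respect to Q = {(c/gcd(a,c), 0), (0, c/gcd(b,c))} equals c/(gcd(a,c)·gcd(b,c)). -/

import Mathlib

/-- The Apéry set of `M = {(x,y) ∈ ℕ² : c ∣ ax + by}` with respect to
`Q = {(c/gcd(a,c), 0), (0, c/gcd(b,c))}` has exactly `c/(gcd(a,c)·gcd(b,c))` elements. -/
theorem stmt_5 (a b c : ℕ) (hc : 0 < c) (ha : 1 ≤ a) (ha' : a < c) (hb : 1 ≤ b) (hb' : b < c)
    (hgcd : Nat.gcd a (Nat.gcd b c) = 1)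
    (M : Set (ℕ × ℕ)) (hM : M = {p | c ∣ a * p.1 + b * p.2})
    (q₁ q₂ : ℕ × ℕ) (hq₁ : q₁ = (c / Nat.gcd a c, 0)) (hq₂ : q₂ = (0, c / Nat.gcd b c)) :
    Set.ncard {m | m ∈ M ∧ ∀ q ∈ ({q₁, q₂} : Set (ℕ × ℕ)), ¬ ∃ x ∈ M, m = q + x}
      = c / (Nat.gcd a c * Nat.gcd b c) := by
  subst hM hq₁ hq₂
  haveI : NeZero c := ⟨hc.ne'⟩
  set d₁ := Nat.gcd a c with hd₁def
  set d₂ := Nat.gcd b c with hd₂def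
  have hd₁c : d₁ ∣ c := Nat.gcd_dvd_right a c
  have hd₂c : d₂ ∣ c := Nat.gcd_dvd_right b c
  have hd₁a : d₁ ∣ a := Nat.gcd_dvd_left a c
  have hd₂b : d₂ ∣ b := Nat.gcd_dvd_left b c
  have had₂ : Nat.Coprime a d₂ := hgcd
  have hd₁d₂ : Nat.Coprime d₁ d₂ := Nat.Coprime.coprime_dvd_left hd₁a had₂
  have hdd : d₁ * d₂ ∣ c := hd₁d₂.mul_dvd_of_dvd_of_dvd hd₁c hd₂c
  have hd₁pos : 0 < d₁ := Nat.gcd_pos_of_pos_right a hc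
  have hd₂pos : 0 < d₂ := Nat.gcd_pos_of_pos_right b hc
  set A := c / d₁ with hAdef
  set B := c / d₂ with hBdef
  set N := c / (d₁ * d₂) with hNdef
  have hApos : 0 < A := Nat.div_pos (Nat.le_of_dvd hc hd₁c) hd₁pos
  have hBpos : 0 < B := Nat.div_pos (Nat.le_of_dvd hc hd₂c) hd₂pos
  have hd₂A : d₂ ∣ A := by
    obtain ⟨e, he⟩ := hdd
    refine ⟨e, ?_⟩
    rw [hAdef, he, mul_assoc, Nat.mul_div_cancel_left _ hd₁pos]
  have hNA : N = A / d₂ := by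
    rw [hNdef, hAdef, Nat.div_div_eq_div_mul]
  have hcaA : c ∣ a * A := by
    obtain ⟨a', ha2⟩ := hd₁a
    refine ⟨a', ?_⟩
    rw [ha2, hAdef, mul_comm d₁ a', mul_assoc, Nat.mul_div_cancel' hd₁c, mul_comm]
  have hcbB : c ∣ b * B := by
    obtain ⟨b', hb2⟩ := hd₂b
    refine ⟨b', ?_⟩
    rw [hb2, hBdef, mul_comm d₂ b', mul_assoc, Nat.mul_div_cancel' hd₂c, mul_comm]
  -- uniqueness of y given x
  have yuniq : ∀ x y y', y < B → y' < B → c ∣ a * x + b * y → c ∣ a * x + b * y' → y = y' := by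
    have key : ∀ x y y', y ≤ y' → y' < B → c ∣ a * x + b * y → c ∣ a * x + b * y' → y = y' := by
      intro x y y' hle hy' h h'
      have hdvd : c ∣ b * (y' - y) := by
        have h2 := Nat.dvd_sub h' h
        rwa [Nat.add_sub_add_left, ← Nat.mul_sub_left_distrib] at h2
      have hc2 : c = d₂ * B := (Nat.mul_div_cancel' hd₂c).symm
      have hb2 : b = d₂ * (b / d₂) := (Nat.mul_div_cancel' hd₂b).symm
      have hcop : Nat.Coprime (b / d₂) B := Nat.coprime_div_gcd_div_gcd hd₂pos
      have hBd : B ∣ y' - y := by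
        have h4 : d₂ * B ∣ d₂ * ((b / d₂) * (y' - y)) := by
          rw [← hc2, ← mul_assoc, ← hb2]; exact hdvd
        have h3 : B ∣ (b / d₂) * (y' - y) := (Nat.mul_dvd_mul_iff_left hd₂pos).mp h4
        exact Nat.Coprime.dvd_of_dvd_mul_left hcop.symm h3
      rcases Nat.eq_zero_or_pos (y' - y) with h0 | h0
      · omega
      · exact absurd (Nat.le_of_dvd h0 hBd) (by omega)
    intro x y y' hy hy' h h'
    rcases le_total y y' with hle | hle
    · exact key x y y' hle hy' h h'
    · exact (key x y' y hle hy h' h).symm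
  -- d₂ divides x for members
  have hxdvd : ∀ x y : ℕ, c ∣ a * x + b * y → d₂ ∣ x := by
    intro x y h
    have h1 : d₂ ∣ a * x + b * y := dvd_trans hd₂c h
    have h2 : d₂ ∣ b * y := Dvd.dvd.mul_right hd₂b y
    have h3 : d₂ ∣ a * x := by
      have := Nat.dvd_sub h1 h2
      rwa [Nat.add_sub_cancel] at this
    exact (Nat.Coprime.dvd_of_dvd_mul_left had₂.symm h3)
  -- existence of y for x = d₂ * k
  have yexists : ∀ k : ℕ, ∃ y < B, c ∣ a * (d₂ * k) + b * y := by
    intro k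
    have hbez := Nat.gcd_eq_gcd_ab b c
    set u : ZMod c := ((Nat.gcdA b c : ℤ) : ZMod c) with hu
    have hbu : (d₂ : ZMod c) = (b : ZMod c) * u := by
      have h1 : ((d₂ : ℤ) : ZMod c) = ((b * Nat.gcdA b c + c * Nat.gcdB b c : ℤ) : ZMod c) := by
        exact_mod_cast congrArg (fun z : ℤ => ((z : ℤ) : ZMod c)) hbez
      push_cast at h1
      simpa [ZMod.natCast_self] using h1
    set z : ZMod c := - ((a : ZMod c) * (k : ZMod c) * u) with hz
    set y₀ := z.val with hy₀
    refine ⟨y₀ % B, Nat.mod_lt _ hBpos, ?_⟩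
    rw [← ZMod.natCast_eq_zero_iff]
    have hsplit : b * y₀ = b * (y₀ % B) + (b * B) * (y₀ / B) := by
      conv_lhs => rw [← Nat.mod_add_div y₀ B]
      ring
    have hbB0 : ((b * B : ℕ) : ZMod c) = 0 := by
      rw [ZMod.natCast_eq_zero_iff]; exact hcbB
    have hby0 : ((b * (y₀ % B) : ℕ) : ZMod c) = ((b * y₀ : ℕ) : ZMod c) := by
      rw [hsplit]; push_cast
      push_cast at hbB0
      rw [hbB0]; ring
    have hy0cast : ((y₀ : ℕ) : ZMod c) = z := by
      simp [hy₀, ZMod.natCast_val, ZMod.cast_id]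
    push_cast
    push_cast at hby0
    rw [hby0, hy0cast, hz, hbu]
    ring
  -- the Apéry set as a finset
  set F : Finset (ℕ × ℕ) :=
    (Finset.range A ×ˢ Finset.range B).filter (fun p => c ∣ a * p.1 + b * p.2) with hF
  have hset : {m : ℕ × ℕ | m ∈ {p : ℕ × ℕ | c ∣ a * p.1 + b * p.2} ∧
      ∀ q ∈ ({(A, 0), (0, B)} : Set (ℕ × ℕ)), ¬ ∃ x ∈ {p : ℕ × ℕ | c ∣ a * p.1 + b * p.2}, m = q + x}
      = ↑F := by
    ext ⟨x, y⟩
    constructor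
    · rintro ⟨hm, hq⟩
      simp only [Set.mem_setOf_eq] at hm
      simp only [hF, Finset.coe_filter, Set.mem_setOf_eq, Finset.mem_product, Finset.mem_range]
      refine ⟨⟨?_, ?_⟩, hm⟩
      · by_contra hx
        push_neg at hx
        refine hq (A, 0) (Set.mem_insert _ _) ⟨(x - A, y), ?_, ?_⟩
        · show c ∣ a * (x - A) + b * y
          have heq : a * (x - A) + b * y = (a * x + b * y) - a * A := by
            rw [Nat.mul_sub_left_distrib]
            have := Nat.mul_le_mul_left a hx
            omega
          rw [heq]; exact Nat.dvd_sub hm hcaA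
        · rw [Prod.mk_add_mk, Prod.mk.injEq]; omega
      · by_contra hy
        push_neg at hy
        refine hq (0, B) (Set.mem_insert_of_mem _ rfl) ⟨(x, y - B), ?_, ?_⟩
        · show c ∣ a * x + b * (y - B)
          have heq : a * x + b * (y - B) = (a * x + b * y) - b * B := by
            rw [Nat.mul_sub_left_distrib]
            have := Nat.mul_le_mul_left b hy
            omega
          rw [heq]; exact Nat.dvd_sub hm hcbB
        · rw [Prod.mk_add_mk, Prod.mk.injEq]; omega
    · intro h
      simp only [hF, Finset.coe_filter, Set.mem_setOf_eq, Finset.mem_product,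
        Finset.mem_range] at h
      obtain ⟨⟨hx, hy⟩, hm⟩ := h
      refine ⟨hm, ?_⟩
      intro q hq' hex
      obtain ⟨p, hp, heq⟩ := hex
      simp only [Set.mem_insert_iff, Set.mem_singleton_iff] at hq'
      rcases hq' with rfl | rfl
      · rw [Prod.mk_add_mk, Prod.mk.injEq] at heq; omega
      · rw [Prod.mk_add_mk, Prod.mk.injEq] at heq; omega
  rw [hset, Set.ncard_coe_finset]
  -- now count F via bijection p ↦ p.1 / d₂ with range N
  have hcard : F.card = (Finset.range N).card := by
    apply Finset.card_bij (fun p _ => p.1 / d₂)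
    · rintro ⟨x, y⟩ hp
      simp only [hF, Finset.mem_filter, Finset.mem_product, Finset.mem_range] at hp
      obtain ⟨⟨hx, hy⟩, hm⟩ := hp
      simp only [Finset.mem_range, hNA]
      exact Nat.div_lt_div_of_lt_of_dvd hd₂A hx
    · rintro ⟨x, y⟩ hp ⟨x', y'⟩ hp' heq
      simp only [hF, Finset.mem_filter, Finset.mem_product, Finset.mem_range] at hp hp'
      obtain ⟨⟨hx, hy⟩, hm⟩ := hp
      obtain ⟨⟨hx', hy'⟩, hm'⟩ := hp'
      have d1 : d₂ ∣ x := hxdvd x y hm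
      have d2 : d₂ ∣ x' := hxdvd x' y' hm'
      have hxx : x = x' := by
        have := congrArg (· * d₂) heq
        simpa [Nat.div_mul_cancel d1, Nat.div_mul_cancel d2] using this
      subst hxx
      exact Prod.ext rfl (yuniq x y y' hy hy' hm hm')
    · intro k hk
      simp only [Finset.mem_range] at hk
      obtain ⟨y, hy, hdvd⟩ := yexists k
      refine ⟨(d₂ * k, y), ?_, Nat.mul_div_cancel_left k hd₂pos⟩
      simp only [hF, Finset.mem_filter, Finset.mem_product, Finset.mem_range]
      refine ⟨⟨?_, hy⟩, hdvd⟩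
      rw [hNA, Nat.lt_div_iff_mul_lt' hd₂A] at hk
      exact hk
  rw [hcard, Finset.card_range]
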